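/- If v_1, ..., v_N ∈ C^r form an ETF and a, b are two rows of the synthesis matrix V viewed as vectors in C^N (so ⟨a,b⟩ = 0 and ‖a‖² = ‖b‖² = N/r), then setting D = (N/r²)(1 + (r-1)²/(N-1)) and E = (N/r - 1)/(r(1-1/N)), we have D ≥ ‖a‖_4⁴, D ≥ ‖b‖_4⁴, and |⟨|a|^{⊙2}, |b|^{⊙2}⟩ - E|² ≤ (D - ‖a‖_4⁴)(D - ‖b‖_4⁴). -/

import Mathlib

open Matrix BigOperators

private lemma swap_lemma {N r : ℕ} (v : Fin N → Fin r → ℂ) (w : Fin N → ℂ) :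
    ∑ m : Fin r, ∑ n : Fin r,
      (∑ i : Fin N, v i m * (starRingEnd ℂ) (v i n) * w i) *
        (starRingEnd ℂ) (∑ j : Fin N, v j m * (starRingEnd ℂ) (v j n) * w j)
    = ∑ i : Fin N, ∑ j : Fin N, (w i * (starRingEnd ℂ) (w j)) *
        ((∑ m : Fin r, v i m * (starRingEnd ℂ) (v j m)) *
         (∑ n : Fin r, (starRingEnd ℂ) (v i n) * v j n)) := by
  simp only [map_sum, _root_.map_mul, Complex.conj_conj, Finset.sum_mul_sum, Finset.mul_sum,
    Finset.sum_mul]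
  simp only [← Fintype.sum_prod_type']
  refine Fintype.sum_equiv ⟨fun x => (x.2.2.2, x.2.2.1, x.2.1, x.1),
    fun x => (x.2.2.2, x.2.2.1, x.2.1, x.1), ?_, ?_⟩ _ _ ?_
  · intro x; simp
  · intro x; simp
  · intro x; dsimp; ring

private lemma quad_aux (A B C : ℝ) (h : ∀ s t : ℝ, 0 ≤ A * s ^ 2 + 2 * B * (s * t) + C * t ^ 2) :
    0 ≤ A ∧ 0 ≤ C ∧ B ^ 2 ≤ A * C := by
  have hA : 0 ≤ A := by have := h 1 0; linarith [h 1 0] 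
  have hC : 0 ≤ C := by have := h 0 1; linarith [h 0 1]
  refine ⟨hA, hC, ?_⟩
  rcases eq_or_lt_of_le hA with hA0 | hA0
  · have hB : B = 0 := by
      by_contra hB
      have h2 : 0 ≤ A * (-(C+1)/(2*B)) ^ 2 + 2 * B * ((-(C+1)/(2*B)) * 1) + C * 1 ^ 2 := h _ 1
      have h3 : 2 * B * ((-(C+1)/(2*B)) * 1) = -(C+1) := by field_simp
      rw [h3, ← hA0] at h2
      nlinarith
    rw [hB, ← hA0]; nlinarith
  · have key := h B (-A)
    nlinarith [key]

set_option maxHeartbeats 1000000 in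
/-- Overlap bound for two distinct rows `a`, `b` of an ETF synthesis matrix:
    `D ≥ ‖a‖₄⁴`, `D ≥ ‖b‖₄⁴`, and
    `|⟨|a|², |b|²⟩ - E|² ≤ (D - ‖a‖₄⁴)(D - ‖b‖₄⁴)`. -/
theorem stmt_17 (N r : ℕ) (hr : 2 ≤ r) (hNr : r < N)
    (v : Fin N → Fin r → ℂ)
    (hunit : ∀ i, ∑ k, ‖v i k‖ ^ 2 = 1)
    (htight : (∑ i, Matrix.vecMulVec (v i) (fun l => (starRingEnd ℂ) (v i l)))
      = ((N : ℂ) / (r : ℂ)) • (1 : Matrix (Fin r) (Fin r) ℂ))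
    (α : ℝ)
    (heq : ∀ i j : Fin N, i ≠ j → ‖∑ k, (starRingEnd ℂ) (v i k) * v j k‖ = α)
    (k l : Fin r) (hkl : k ≠ l)
    (a b : Fin N → ℂ) (ha : a = fun i => v i k) (hb : b = fun i => v i l)
    (D E : ℝ)
    (hD : D = ((N : ℝ) / (r : ℝ) ^ 2) * (1 + ((r : ℝ) - 1) ^ 2 / ((N : ℝ) - 1)))
    (hE : E = ((N : ℝ) / (r : ℝ) - 1) / ((r : ℝ) * (1 - 1 / (N : ℝ)))) :
    (∑ i, ‖a i‖ ^ 4) ≤ D ∧ (∑ i, ‖b i‖ ^ 4) ≤ D ∧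
      ((∑ i, ‖a i‖ ^ 2 * ‖b i‖ ^ 2) - E) ^ 2
        ≤ (D - ∑ i, ‖a i‖ ^ 4) * (D - ∑ i, ‖b i‖ ^ 4) := by
  subst ha hb
  have hr2 : (2:ℝ) ≤ (r:ℝ) := by exact_mod_cast hr
  have hNR : (r:ℝ) < (N:ℝ) := by exact_mod_cast hNr
  have hrpos : (0:ℝ) < (r:ℝ) := by linarith
  have hr0 : (r:ℝ) ≠ 0 := ne_of_gt hrpos
  have hN0 : (N:ℝ) ≠ 0 := by intro h; nlinarith
  have hN1 : (0:ℝ) < (N:ℝ) - 1 := by linarith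
  have hrC : (r:ℂ) ≠ 0 := by exact_mod_cast (Nat.cast_ne_zero (R := ℂ)).mpr (by omega)
  have conj_sq : ∀ z : ℂ, z * (starRingEnd ℂ) z = ((‖z‖^2 : ℝ) : ℂ) := by
    intro z; rw [Complex.mul_conj]; norm_cast; exact (Complex.sq_norm z).symm
  have hF1 : ∀ m n : Fin r, (∑ i, v i m * (starRingEnd ℂ) (v i n))
      = if m = n then ((N:ℂ)/(r:ℂ)) else 0 := by
    intro m n
    have h := congrFun (congrFun htight m) n
    simp only [Matrix.sum_apply, Matrix.vecMulVec_apply, Matrix.smul_apply, Matrix.one_apply,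
      smul_eq_mul, mul_ite, mul_one, mul_zero] at h
    exact h
  have hdiag : ∀ i, (∑ m, v i m * (starRingEnd ℂ) (v i m)) = 1 := by
    intro i
    simp only [conj_sq]
    rw [← Complex.ofReal_sum, hunit i]; norm_num
  have hsum_x : ∑ i, ‖v i k‖^2 = (N:ℝ)/(r:ℝ) := by
    have h := hF1 k k
    rw [if_pos rfl] at h
    simp only [conj_sq] at h
    rw [← Complex.ofReal_sum] at h
    have h2 : ((∑ i, ‖v i k‖^2 : ℝ) : ℂ) = (((N:ℝ)/(r:ℝ) : ℝ) : ℂ) := by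
      rw [h]; push_cast; ring
    exact_mod_cast h2
  have hsum_y : ∑ i, ‖v i l‖^2 = (N:ℝ)/(r:ℝ) := by
    have h := hF1 l l
    rw [if_pos rfl] at h
    simp only [conj_sq] at h
    rw [← Complex.ofReal_sum] at h
    have h2 : ((∑ i, ‖v i l‖^2 : ℝ) : ℂ) = (((N:ℝ)/(r:ℝ) : ℝ) : ℂ) := by
      rw [h]; push_cast; ring
    exact_mod_cast h2
  have hterm : ∀ i j : Fin N,
      ((∑ m : Fin r, v i m * (starRingEnd ℂ) (v j m)) *
       (∑ n : Fin r, (starRingEnd ℂ) (v i n) * v j n))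
      = (((if i = j then (1:ℝ) else α^2) : ℝ) : ℂ) := by
    intro i j
    have hCeq : (∑ m : Fin r, v i m * (starRingEnd ℂ) (v j m))
        = (starRingEnd ℂ) (∑ n : Fin r, (starRingEnd ℂ) (v i n) * v j n) := by
      simp only [map_sum, _root_.map_mul, Complex.conj_conj]
      try exact Finset.sum_congr rfl fun n _ => (mul_comm _ _)
    by_cases hij : i = j
    · subst hij
      have h2 : (∑ n : Fin r, (starRingEnd ℂ) (v i n) * v i n) = 1 := by
        rw [← hdiag i]
        exact Finset.sum_congr rfl fun n _ => (mul_comm _ _)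
      rw [hCeq, h2]
      simp
    · simp only [if_neg hij]
      rw [hCeq, mul_comm, conj_sq, heq i j hij]
  have halpha : α^2 = ((N:ℝ) - (r:ℝ)) / ((r:ℝ) * ((N:ℝ) - 1)) := by
    have hswap := swap_lemma v (fun _ => 1)
    simp only [mul_one, _root_.map_one, one_mul] at hswap
    have hL : ∑ m : Fin r, ∑ n : Fin r,
        (∑ i : Fin N, v i m * (starRingEnd ℂ) (v i n)) *
          (starRingEnd ℂ) (∑ j : Fin N, v j m * (starRingEnd ℂ) (v j n))
        = (N:ℂ)^2 / (r:ℂ) := by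
      simp only [hF1, apply_ite (starRingEnd ℂ), map_zero, map_div₀, Complex.conj_natCast,
        ite_mul, zero_mul, mul_ite, mul_zero]
      simp only [Finset.sum_ite_eq, Finset.mem_univ, if_pos, if_true]
      rw [Finset.sum_const, Finset.card_univ, Fintype.card_fin]
      field_simp
      rw [nsmul_eq_mul, ← mul_assoc, ← sq, mul_div_assoc', mul_comm, mul_div_assoc,
        div_self (pow_ne_zero 2 hrC), mul_one]
    have hterm : ∀ i j : Fin N,
        ((∑ m : Fin r, v i m * (starRingEnd ℂ) (v j m)) *
         (∑ n : Fin r, (starRingEnd ℂ) (v i n) * v j n))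
        = (((if i = j then (1:ℝ) else α^2) : ℝ) : ℂ) := by
      intro i j
      have hCeq : (∑ m : Fin r, v i m * (starRingEnd ℂ) (v j m))
          = (starRingEnd ℂ) (∑ n : Fin r, (starRingEnd ℂ) (v i n) * v j n) := by
        simp only [map_sum, _root_.map_mul, Complex.conj_conj]
        try exact Finset.sum_congr rfl fun n _ => (mul_comm _ _)
      by_cases hij : i = j
      · subst hij
        have h2 : (∑ n : Fin r, (starRingEnd ℂ) (v i n) * v i n) = 1 := by
          rw [← hdiag i]
          exact Finset.sum_congr rfl fun n _ => (mul_comm _ _)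
        rw [hCeq, h2]
        simp
      · simp only [if_neg hij]
        rw [hCeq, mul_comm, conj_sq, heq i j hij]
    rw [hL] at hswap
    simp only [hterm] at hswap
    have hreal : (N:ℝ)^2/(r:ℝ) = ∑ i : Fin N, ∑ j : Fin N, (if i = j then (1:ℝ) else α^2) := by
      have hc : (((N:ℝ)^2/(r:ℝ) : ℝ) : ℂ)
          = ((∑ i : Fin N, ∑ j : Fin N, (if i = j then (1:ℝ) else α^2) : ℝ) : ℂ) := by
        rw [Complex.ofReal_sum]
        simp only [Complex.ofReal_sum]
        rw [← hswap]
        push_cast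
        norm_cast
      exact_mod_cast hc
    have hrow : ∀ i : Fin N, (∑ j : Fin N, (if i = j then (1:ℝ) else α^2))
        = 1 + ((N:ℝ) - 1) * α^2 := by
      intro i
      have hsplit : ∀ j : Fin N, (if i = j then (1:ℝ) else α^2)
          = α^2 + (if i = j then 1 - α^2 else 0) := by
        intro j; by_cases h : i = j <;> simp [h]
      simp only [hsplit, Finset.sum_add_distrib, Finset.sum_ite_eq, Finset.mem_univ, if_true,
        Finset.sum_const, Finset.card_univ, Fintype.card_fin, nsmul_eq_mul]
      ring
    rw [Finset.sum_congr rfl (fun i _ => hrow i), Finset.sum_const, Finset.card_univ,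
      Fintype.card_fin, nsmul_eq_mul] at hreal
    have hN1 : (N:ℝ) - 1 ≠ 0 := by intro h; nlinarith
    have hr0 : (r:ℝ) ≠ 0 := by intro h; nlinarith
    have hN0 : (N:ℝ) ≠ 0 := by intro h; nlinarith
    have hrN1 : (r:ℝ) * ((N:ℝ) - 1) ≠ 0 := mul_ne_zero hr0 hN1
    rw [eq_div_iff hrN1]
    field_simp at hreal
    have hreal2 : (N:ℝ) = (1 + ((N:ℝ) - 1) * α ^ 2) * (r:ℝ) :=
      mul_left_cancel₀ hN0 (by linear_combination (N:ℝ) * hreal)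
    linear_combination (-1 : ℝ) * hreal2
  have hbnn : 0 ≤ 1 - α^2 := by
    have h1 : α^2 ≤ 1 := by
      rw [halpha, div_le_one (by positivity)]
      nlinarith
    linarith
  have key : ∀ s t : ℝ,
      s^2*(∑ i, ‖v i k‖^2*‖v i k‖^2) + 2*(s*t)*(∑ i, ‖v i k‖^2*‖v i l‖^2)
        + t^2*(∑ i, ‖v i l‖^2*‖v i l‖^2)
        ≤ (N:ℝ)*(s+t)^2/(r:ℝ)^2 + (1-α^2)*(s^2+t^2-(s+t)^2/(r:ℝ)) := by
    intro s t
    have hr0 : (r:ℝ) ≠ 0 := by intro h; nlinarith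
    obtain ⟨u, hu⟩ : ∃ u : ℝ, u = (s+t)/(r:ℝ) := ⟨_, rfl⟩
    obtain ⟨f, hf⟩ : ∃ f : Fin N → ℝ, f = fun i => s*‖v i k‖^2 + t*‖v i l‖^2 - u := ⟨_, rfl⟩
    obtain ⟨H, hH⟩ : ∃ H : ℝ, H = ∑ i, (f i)^2 := ⟨_, rfl⟩
    have hHnn : 0 ≤ H := hH ▸ Finset.sum_nonneg fun i _ => sq_nonneg _
    have hsumf : ∑ i, f i = 0 := by
      have e1 : ∑ i, f i = s*(∑ i, ‖v i k‖^2) + t*(∑ i, ‖v i l‖^2) - (N:ℝ)*u := by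
        simp only [hf]
        rw [Finset.sum_sub_distrib, Finset.sum_add_distrib, ← Finset.mul_sum, ← Finset.mul_sum,
          Finset.sum_const, Finset.card_univ, Fintype.card_fin, nsmul_eq_mul]
      rw [e1, hsum_x, hsum_y, hu]
      field_simp
      ring
    obtain ⟨g, hg⟩ : ∃ g : Fin r → Fin r → ℂ,
        g = fun m n => ∑ i, v i m * (starRingEnd ℂ) (v i n) * ((f i : ℝ) : ℂ) := ⟨_, rfl⟩
    have hGnorm : ∑ m, ∑ n, ‖g m n‖^2 = (1-α^2)*H := by
      have hswap := swap_lemma v (fun i => ((f i : ℝ) : ℂ))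
      have hLc : ∑ m : Fin r, ∑ n : Fin r,
          (∑ i : Fin N, v i m * (starRingEnd ℂ) (v i n) * ((f i : ℝ) : ℂ)) *
            (starRingEnd ℂ) (∑ j : Fin N, v j m * (starRingEnd ℂ) (v j n) * ((f j : ℝ) : ℂ))
          = ((∑ m, ∑ n, ‖g m n‖^2 : ℝ) : ℂ) := by
        rw [Complex.ofReal_sum]
        apply Finset.sum_congr rfl; intro m _
        rw [Complex.ofReal_sum]
        apply Finset.sum_congr rfl; intro n _
        rw [← conj_sq (g m n), hg]
      have hRc : (∑ i : Fin N, ∑ j : Fin N, (((f i : ℝ) : ℂ) * (starRingEnd ℂ) ((f j : ℝ) : ℂ)) *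
          ((∑ m : Fin r, v i m * (starRingEnd ℂ) (v j m)) *
           (∑ n : Fin r, (starRingEnd ℂ) (v i n) * v j n)))
          = (((1-α^2)*H : ℝ) : ℂ) := by
        have e2 : ∀ i j : Fin N, (((f i : ℝ) : ℂ) * (starRingEnd ℂ) ((f j : ℝ) : ℂ)) *
            ((∑ m : Fin r, v i m * (starRingEnd ℂ) (v j m)) *
             (∑ n : Fin r, (starRingEnd ℂ) (v i n) * v j n))
            = ((f i * f j * (if i = j then (1:ℝ) else α^2) : ℝ) : ℂ) := by
          intro i j
          rw [hterm i j, Complex.conj_ofReal]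
          push_cast
          ring
        simp only [e2]
        have e3 : ∑ i : Fin N, ∑ j : Fin N, ((f i * f j * (if i = j then (1:ℝ) else α^2) : ℝ) : ℂ)
            = ((∑ i : Fin N, ∑ j : Fin N, f i * f j * (if i = j then (1:ℝ) else α^2) : ℝ) : ℂ) := by
          rw [Complex.ofReal_sum]
          apply Finset.sum_congr rfl; intro i _
          rw [Complex.ofReal_sum]
        rw [e3]
        norm_cast
        have e4 : ∀ i j : Fin N, f i * f j * (if i = j then (1:ℝ) else α^2)
            = α^2*(f i * f j) + (if i = j then (1-α^2)*((f j)^2) else 0) := by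
          intro i j; by_cases h : i = j
          · subst h; simp; ring
          · simp [h]; ring
        calc ∑ i : Fin N, ∑ j : Fin N, f i * f j * (if i = j then (1:ℝ) else α^2)
            = ∑ i : Fin N, (α^2 * (f i * ∑ j, f j) + (1-α^2)*((f i)^2)) := by
              apply Finset.sum_congr rfl; intro i _
              simp only [e4]
              rw [Finset.sum_add_distrib]
              simp only [Finset.sum_ite_eq, Finset.mem_univ, if_true]
              rw [← Finset.mul_sum, ← Finset.mul_sum]
          _ = (1-α^2)*H := by
              simp only [hsumf, mul_zero]
              rw [Finset.sum_add_distrib]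
              simp only [mul_zero, Finset.sum_const, smul_zero, zero_add]
              rw [← Finset.mul_sum, hH]
      rw [hLc, hRc] at hswap
      exact_mod_cast hswap
    have hgkk : g k k = ((∑ i, ‖v i k‖^2 * f i : ℝ) : ℂ) := by
      rw [hg, Complex.ofReal_sum]
      apply Finset.sum_congr rfl; intro i _
      rw [conj_sq]
      push_cast
      ring
    have hgll : g l l = ((∑ i, ‖v i l‖^2 * f i : ℝ) : ℂ) := by
      rw [hg, Complex.ofReal_sum]
      apply Finset.sum_congr rfl; intro i _
      rw [conj_sq]
      push_cast
      ring
    have htr : ∑ m, g m m = 0 := by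
      simp only [hg]
      rw [Finset.sum_comm]
      have e5 : ∀ i, (∑ m : Fin r, v i m * (starRingEnd ℂ) (v i m) * ((f i : ℝ) : ℂ))
          = ((f i : ℝ) : ℂ) := by
        intro i; rw [← Finset.sum_mul, hdiag, one_mul]
      rw [Finset.sum_congr rfl (fun i _ => e5 i), ← Complex.ofReal_sum, hsumf]
      norm_num
    obtain ⟨c, hc⟩ : ∃ c : Fin r → ℝ,
        c = fun m => (if m = k then s else 0) + (if m = l then t else 0) - u := ⟨_, rfl⟩
    have hCsq : ∑ m, (c m)^2 = s^2 + t^2 - (s+t)^2/(r:ℝ) := by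
      have e6 : ∀ m, (c m)^2 = (if m = k then s^2 - 2*s*u else 0)
          + ((if m = l then t^2 - 2*t*u else 0) + u^2) := by
        intro m
        simp only [hc]
        by_cases h1 : m = k <;> by_cases h2 : m = l
        · exact absurd (h1.symm.trans h2) hkl
        · simp [h1, h2, hkl, Ne.symm hkl]; try ring
        · simp [h1, h2, hkl, Ne.symm hkl]; try ring
        · simp [h1, h2, hkl, Ne.symm hkl]; try ring
      rw [Finset.sum_congr rfl (fun m _ => e6 m), Finset.sum_add_distrib, Finset.sum_add_distrib,
        Finset.sum_ite_eq' Finset.univ k (fun _ => s^2 - 2*s*u),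
        Finset.sum_ite_eq' Finset.univ l (fun _ => t^2 - 2*t*u),
        Finset.sum_const, Finset.card_univ, Fintype.card_fin, nsmul_eq_mul]
      simp only [Finset.mem_univ, if_true, hu]
      field_simp
      ring
    have hCsqnn : 0 ≤ ∑ m, (c m)^2 := Finset.sum_nonneg fun m _ => sq_nonneg _
    have hcg : ∑ m, ((c m : ℝ) : ℂ) * g m m = (H : ℂ) := by
      have e7 : ∀ m : Fin r, ((c m : ℝ) : ℂ) * g m m
          = (if m = k then (s:ℂ) * g m m else 0) + ((if m = l then (t:ℂ) * g m m else 0)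
            - ((u:ℝ) : ℂ) * g m m) := by
        intro m
        simp only [hc]
        by_cases h1 : m = k <;> by_cases h2 : m = l
        · exact absurd (h1.symm.trans h2) hkl
        · simp [h1, h2, hkl, Ne.symm hkl]; try (push_cast; ring)
        · simp [h1, h2, hkl, Ne.symm hkl]; try (push_cast; ring)
        · simp [h1, h2, hkl, Ne.symm hkl]; try (push_cast; ring)
      rw [Finset.sum_congr rfl (fun m _ => e7 m), Finset.sum_add_distrib, Finset.sum_sub_distrib,
        Finset.sum_ite_eq' Finset.univ k (fun m => (s:ℂ) * g m m),
        Finset.sum_ite_eq' Finset.univ l (fun m => (t:ℂ) * g m m),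
        ← Finset.mul_sum, htr, mul_zero, sub_zero]
      simp only [Finset.mem_univ, if_true]
      have e8 : s * (∑ i, ‖v i k‖^2 * f i) + t * (∑ i, ‖v i l‖^2 * f i) = H := by
        have e8a : s * (∑ i, ‖v i k‖^2 * f i) + t * (∑ i, ‖v i l‖^2 * f i)
            = ∑ i, (f i + u) * f i := by
          rw [Finset.mul_sum, Finset.mul_sum, ← Finset.sum_add_distrib]
          apply Finset.sum_congr rfl; intro i _
          simp only [hf]
          ring
        rw [e8a]
        have e8b : ∀ i, (f i + u) * f i = (f i)^2 + u * f i := by intro i; ring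
        rw [Finset.sum_congr rfl (fun i _ => e8b i), Finset.sum_add_distrib, ← Finset.mul_sum,
          hsumf, mul_zero, add_zero, hH]
      rw [hgkk, hgll, ← Complex.ofReal_mul, ← Complex.ofReal_mul, ← Complex.ofReal_add, e8]
    -- Cauchy-Schwarz chain
    have step1 : H ≤ ∑ m, |c m| * ‖g m m‖ := by
      have e9 : H = ‖(H : ℂ)‖ := by
        rw [Complex.norm_real, Real.norm_eq_abs, abs_of_nonneg hHnn]
      rw [e9, ← hcg]
      refine le_trans (norm_sum_le _ _) (le_of_eq ?_)
      apply Finset.sum_congr rfl; intro m _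
      rw [norm_mul, Complex.norm_real, Real.norm_eq_abs]
    have step2 : (∑ m, |c m| * ‖g m m‖)^2 ≤ (∑ m, (c m)^2) * (∑ m, ‖g m m‖^2) := by
      have h2 := Finset.sum_mul_sq_le_sq_mul_sq Finset.univ (fun m => |c m|) (fun m => ‖g m m‖)
      simpa [sq_abs] using h2
    have step3 : (∑ m, ‖g m m‖^2) ≤ ∑ m, ∑ n, ‖g m n‖^2 := by
      apply Finset.sum_le_sum; intro m _
      exact Finset.single_le_sum (f := fun n => ‖g m n‖^2) (fun n _ => sq_nonneg _)
        (Finset.mem_univ m)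
    have hmain : H ≤ (1-α^2) * (s^2 + t^2 - (s+t)^2/(r:ℝ)) := by
      rw [← hCsq]
      rcases eq_or_lt_of_le hHnn with h0 | h0
      · rw [← h0]; exact mul_nonneg hbnn hCsqnn
      · have hstep : H^2 ≤ (∑ m, (c m)^2) * ((1-α^2) * H) := by
          calc H^2 ≤ (∑ m, |c m| * ‖g m m‖)^2 := by
                exact pow_le_pow_left₀ hHnn step1 2
            _ ≤ (∑ m, (c m)^2) * (∑ m, ‖g m m‖^2) := step2
            _ ≤ (∑ m, (c m)^2) * ((1-α^2)*H) := by
                rw [← hGnorm]; exact mul_le_mul_of_nonneg_left step3 hCsqnn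
        nlinarith [hstep, h0]
    have hHexp : H = s^2*(∑ i, ‖v i k‖^2*‖v i k‖^2) + 2*(s*t)*(∑ i, ‖v i k‖^2*‖v i l‖^2)
        + t^2*(∑ i, ‖v i l‖^2*‖v i l‖^2) - (N:ℝ)*(s+t)^2/(r:ℝ)^2 := by
      rw [hH]
      have e10 : ∀ i, (f i)^2 = (s^2*(‖v i k‖^2*‖v i k‖^2) + 2*(s*t)*(‖v i k‖^2*‖v i l‖^2)
          + t^2*(‖v i l‖^2*‖v i l‖^2)) - (2*s*u*‖v i k‖^2 + 2*t*u*‖v i l‖^2 - u^2) := by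
        intro i; simp only [hf]; ring
      rw [Finset.sum_congr rfl (fun i _ => e10 i), Finset.sum_sub_distrib]
      simp only [Finset.sum_add_distrib, Finset.sum_sub_distrib, ← Finset.mul_sum,
        Finset.sum_const, Finset.card_univ, Fintype.card_fin, nsmul_eq_mul]
      rw [hsum_x, hsum_y, hu]
      field_simp
      ring
    linarith [hmain, hHexp]
  have hDE : ∀ s t : ℝ, (N:ℝ)*(s+t)^2/(r:ℝ)^2 + (1-α^2)*(s^2+t^2-(s+t)^2/(r:ℝ))
      = D*(s^2+t^2) + 2*E*(s*t) := by
    intro s t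
    rw [hD, hE, halpha]
    field_simp
    ring
  obtain ⟨hA, hC, hB⟩ := quad_aux (D - ∑ i, ‖v i k‖^2*‖v i k‖^2)
      (E - ∑ i, ‖v i k‖^2*‖v i l‖^2) (D - ∑ i, ‖v i l‖^2*‖v i l‖^2)
      (fun s t => by
        have h1 := key s t
        rw [hDE s t] at h1
        nlinarith [h1])
  have h4 : ∀ z : ℂ, ‖z‖^4 = ‖z‖^2*‖z‖^2 := fun z => by ring
  show (∑ i, ‖v i k‖^4) ≤ D ∧ (∑ i, ‖v i l‖^4) ≤ D ∧
      ((∑ i, ‖v i k‖^2 * ‖v i l‖^2) - E)^2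
        ≤ (D - ∑ i, ‖v i k‖^4) * (D - ∑ i, ‖v i l‖^4)
  rw [show (∑ i, ‖v i k‖^4) = ∑ i, ‖v i k‖^2*‖v i k‖^2 from
      Finset.sum_congr rfl fun i _ => h4 _,
    show (∑ i, ‖v i l‖^4) = ∑ i, ‖v i l‖^2*‖v i l‖^2 from
      Finset.sum_congr rfl fun i _ => h4 _]
  refine ⟨by linarith, by linarith, ?_⟩
  calc ((∑ i, ‖v i k‖^2 * ‖v i l‖^2) - E)^2
      = (E - ∑ i, ‖v i k‖^2 * ‖v i l‖^2)^2 := by ring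
    _ ≤ _ := hB
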